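/- Let R be a ring and 𝒮 a sublattice of the lattice of two-sided ideals of R, closed under arbitrary intersections, containing {0} and R, and such that every I ∈ 𝒮 equals the intersection of all 𝒮-prime ideals containing it. Then the sets W(I) = { 𝔭 ∈ Spec_𝒮(R) : I ⊄ 𝔭 }, for I ∈ 𝒮, form a topology on Spec_𝒮(R), and the assignment U ↦ ⋂_{𝔭 ∈ Uᶜ} 𝔭 is a lattice isomorphism from the lattice of open sets of Spec_𝒮(R) onto 𝒮, with inverse I ↦ W(I). -/

import Mathlib

/-- An `𝒮`-prime ideal: a member `𝔭 ≠ R` of `𝒮` such that for all `I, J ∈ 𝒮`,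
`IJ ⊆ 𝔭` implies `I ⊆ 𝔭` or `J ⊆ 𝔭`. -/
def SPrime {R : Type*} [Ring R] (S : Set (TwoSidedIdeal R)) (p : TwoSidedIdeal R) : Prop :=
  p ∈ S ∧ p ≠ ⊤ ∧
    ∀ I ∈ S, ∀ J ∈ S, (∀ a ∈ I, ∀ b ∈ J, a * b ∈ p) → I ≤ p ∨ J ≤ p

section Aux

variable {R : Type*} [Ring R] (S : Set (TwoSidedIdeal R))

/-- The basic open set `W(I)`. -/
def WS (I : TwoSidedIdeal R) : Set {p : TwoSidedIdeal R // SPrime S p} :=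
  {p | ¬ I ≤ p.1}

lemma WS_compl_set (I : TwoSidedIdeal R) :
    {q : TwoSidedIdeal R | ∃ p : {p : TwoSidedIdeal R // SPrime S p}, p.1 = q ∧ p ∉ WS S I}
      = {q : TwoSidedIdeal R | SPrime S q ∧ I ≤ q} := by
  ext q
  constructor
  · rintro ⟨p, rfl, hp⟩
    exact ⟨p.2, not_not.1 hp⟩
  · rintro ⟨hq, hIq⟩
    exact ⟨⟨q, hq⟩, rfl, not_not.2 hIq⟩

lemma WS_key (hker : ∀ I ∈ S, I = sInf {p : TwoSidedIdeal R | SPrime S p ∧ I ≤ p})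
    {I : TwoSidedIdeal R} (hI : I ∈ S) :
    sInf {q : TwoSidedIdeal R |
      ∃ p : {p : TwoSidedIdeal R // SPrime S p}, p.1 = q ∧ p ∉ WS S I} = I := by
  rw [WS_compl_set, ← hker I hI]

lemma WS_mono_iff (hker : ∀ I ∈ S, I = sInf {p : TwoSidedIdeal R | SPrime S p ∧ I ≤ p})
    {I J : TwoSidedIdeal R} (hJ : J ∈ S) :
    WS S I ⊆ WS S J ↔ I ≤ J := by
  constructor
  · intro h
    rw [hker J hJ]
    refine le_sInf fun q ⟨hq, hJq⟩ => ?_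
    by_contra hIq
    exact (h (show (⟨q, hq⟩ : {p // SPrime S p}) ∈ WS S I from hIq)) hJq
  · intro h p hp hJp
    exact hp (h.trans hJp)

end Aux

/-- for a sublattice `𝒮` of the ideal lattice of `R`, closed under arbitrary
intersections, containing `{0}` and `R`, in which every member is an intersection of
`𝒮`-primes, the sets `W(I) = {𝔭 : I ⊄ 𝔭}` form a topology on `Spec_𝒮(R)`, and
`U ↦ ⋂_{𝔭 ∈ Uᶜ} 𝔭` is a lattice (order) isomorphism from the open sets onto `𝒮`,
with inverse `I ↦ W(I)`. -/
theorem stmt_14 {R : Type*} [Ring R] (S : Set (TwoSidedIdeal R))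
    (hbot : ⊥ ∈ S) (htop : ⊤ ∈ S)
    (hsup : ∀ I ∈ S, ∀ J ∈ S, I ⊔ J ∈ S)
    (hinf : ∀ T : Set (TwoSidedIdeal R), T ⊆ S → sInf T ∈ S)
    (hker : ∀ I ∈ S, I = sInf {p : TwoSidedIdeal R | SPrime S p ∧ I ≤ p}) :
    ∃ t : TopologicalSpace {p : TwoSidedIdeal R // SPrime S p},
      (∀ U : Set {p : TwoSidedIdeal R // SPrime S p},
        @IsOpen _ t U ↔ ∃ I ∈ S, U = {p | ¬ I ≤ p.1}) ∧
      ∃ e : {U : Set {p : TwoSidedIdeal R // SPrime S p} // @IsOpen _ t U} ≃o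
          {I : TwoSidedIdeal R // I ∈ S},
        (∀ U, (e U : TwoSidedIdeal R) = sInf {q : TwoSidedIdeal R |
            ∃ p : {p : TwoSidedIdeal R // SPrime S p}, p.1 = q ∧ p ∉ U.1}) ∧
        (∀ I, ((e.symm I : Set {p : TwoSidedIdeal R // SPrime S p}) =
            {p | ¬ (I : TwoSidedIdeal R) ≤ p.1})) := by
  classical
  set Pt := {p : TwoSidedIdeal R // SPrime S p}
  -- the topology
  refine ⟨{ IsOpen := fun U => ∃ I ∈ S, U = WS S I
            isOpen_univ := ⟨⊤, htop, ?_⟩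
            isOpen_inter := ?_
            isOpen_sUnion := ?_ }, ?_, ?_⟩
  · ext p
    simp only [Set.mem_univ, WS, Set.mem_setOf_eq, true_iff]
    intro h
    exact p.2.2.1 (top_le_iff.1 h)
  · rintro U V ⟨I, hI, rfl⟩ ⟨J, hJ, rfl⟩
    refine ⟨I ⊓ J, ?_, ?_⟩
    · have := hinf {I, J} (by rintro q (rfl | rfl) <;> assumption)
      rwa [sInf_pair] at this
    · ext p
      simp only [Set.mem_inter_iff, WS, Set.mem_setOf_eq]
      constructor
      · intro ⟨hIp, hJp⟩ h
        rcases p.2.2.2 I hI J hJ (fun a ha b hb => h ((TwoSidedIdeal.mem_inf R).2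
          ⟨I.mul_mem_right a b ha, J.mul_mem_left a b hb⟩)) with h' | h'
        · exact hIp h'
        · exact hJp h'
      · intro h
        exact ⟨fun h' => h (le_trans inf_le_left h'),
               fun h' => h (le_trans inf_le_right h')⟩
  · intro T hT
    set A : Set (TwoSidedIdeal R) :=
      {q | ∃ hq : SPrime S q, (⟨q, hq⟩ : Pt) ∉ ⋃₀ T} with hA
    refine ⟨sInf A, hinf A (fun q hq => hq.1.1), ?_⟩
    ext p
    simp only [WS, Set.mem_setOf_eq]
    constructor
    · rintro ⟨U, hUT, hpU⟩ hle
      obtain ⟨I, hIS, rfl⟩ := hT U hUT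
      have hIA : I ≤ sInf A := by
        refine le_sInf fun q hq => ?_
        obtain ⟨hq, hqT⟩ := hq
        by_contra hIq
        exact hqT ⟨WS S I, hUT, hIq⟩
      exact hpU (hIA.trans hle)
    · intro h
      by_contra hp
      refine h (sInf_le ?_)
      refine ⟨p.2, fun hmem => hp ?_⟩
      convert hmem
  · exact fun U => Iff.rfl
  · -- the order isomorphism
    have hSsub : ∀ U : Set Pt,
        {q : TwoSidedIdeal R | ∃ p : Pt, p.1 = q ∧ p ∉ U} ⊆ S := by
      rintro U q ⟨p, rfl, _⟩
      exact p.2.1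
    refine ⟨{ toFun := fun U => ⟨sInf {q | ∃ p : Pt, p.1 = q ∧ p ∉ U.1}, hinf _ (hSsub U.1)⟩
              invFun := fun I => ⟨WS S I.1, I.1, I.2, rfl⟩
              left_inv := ?_
              right_inv := ?_
              map_rel_iff' := ?_ }, fun U => rfl, fun I => rfl⟩
    · rintro ⟨U, I, hI, rfl⟩
      exact Subtype.ext (by simp only; rw [WS_key S hker hI])
    · rintro ⟨I, hI⟩
      exact Subtype.ext (WS_key S hker hI)
    · rintro ⟨U, I, hI, rfl⟩ ⟨V, J, hJ, rfl⟩
      simp only [Equiv.coe_fn_mk, Subtype.mk_le_mk, WS_key S hker hI, WS_key S hker hJ]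
      have h1 : sInf {q : TwoSidedIdeal R | ∃ p : Pt, p.1 = q ∧ p ∉ WS S I} = I := WS_key S hker hI
      have h2 : sInf {q : TwoSidedIdeal R | ∃ p : Pt, p.1 = q ∧ p ∉ WS S J} = J := WS_key S hker hJ
      rw [h1, h2]
      exact (WS_mono_iff S hker hJ).symm
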